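/- Every holonomic sequence over a field K of characteristic zero whose defining recurrence has order l and degree 1 is simple ratrec of order at most l+1: there exist polynomials Q, R in l+1 variables over K, with Q not identically zero as a polynomial, such that for all n with Q(a(n),…,a(n+l)) ≠ 0, one has a(n+l+1) = R(a(n),…,a(n+l)) / Q(a(n),…,a(n+l)); moreover the polynomial identity Q(a(n),…,a(n+l)) * a(n+l+1) = R(a(n),…,a(n+l)) holds for all n. -/

import Mathlib

open Finset

noncomputable def linP {K : Type*} [CommSemiring K] {N : ℕ} (g : Fin N → K) :
    MvPolynomial (Fin N) K := ∑ k, MvPolynomial.C (g k) * MvPolynomial.X k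

lemma eval_linP {K : Type*} [CommSemiring K] {N : ℕ} (g x : Fin N → K) :
    MvPolynomial.eval x (linP g) = ∑ k, g k * x k := by
  simp [linP]

lemma linP_ne_zero {K : Type*} [CommRing K] {N : ℕ} {g : Fin N → K} (k : Fin N)
    (h : g k ≠ 0) : linP g ≠ 0 := by
  intro h0
  have h1 := congrArg (MvPolynomial.eval (Pi.single k (1 : K))) h0
  rw [eval_linP] at h1
  simp [Pi.single_apply, mul_ite, Finset.sum_ite_eq'] at h1
  exact h h1

theorem degree_one_holonomic_is_simple_ratrec
    (K : Type*) [Field K] [CharZero K] (l : ℕ) (a : ℕ → K)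
    (P : ℕ → Polynomial K)
    (hdeg : ∀ i ≤ l, (P i).natDegree ≤ 1)
    (hne : ∃ i ≤ l, P i ≠ 0)
    (hrec : ∀ n : ℕ,
      ∑ i ∈ range (l + 1), (P i).eval (n : K) * a (n + i) = 0) :
    ∃ Q R : MvPolynomial (Fin (l + 1)) K, Q ≠ 0 ∧
      ∀ n : ℕ,
        (MvPolynomial.eval (fun i : Fin (l + 1) => a (n + i)) Q ≠ 0 →
          a (n + l + 1) =
            MvPolynomial.eval (fun i : Fin (l + 1) => a (n + i)) R /
              MvPolynomial.eval (fun i : Fin (l + 1) => a (n + i)) Q) ∧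
        MvPolynomial.eval (fun i : Fin (l + 1) => a (n + i)) Q * a (n + l + 1) =
          MvPolynomial.eval (fun i : Fin (l + 1) => a (n + i)) R := by
  classical
  obtain ⟨i₀, hi₀l, hi₀⟩ := hne
  obtain ⟨j, hj⟩ : ∃ j, j = Nat.findGreatest (fun i => P i ≠ 0) l := ⟨_, rfl⟩
  have hjl : j ≤ l := hj ▸ Nat.findGreatest_le l
  have hPj : P j ≠ 0 := by
    rw [hj]; exact Nat.findGreatest_spec (P := fun i => P i ≠ 0) hi₀l hi₀
  have hPgt : ∀ i, j < i → i ≤ l → P i = 0 := by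
    intro i h1 h2
    by_contra hP
    exact Nat.findGreatest_is_greatest (P := fun i => P i ≠ 0) (hj ▸ h1) h2 hP
  obtain ⟨b, hbdef⟩ : ∃ f : ℕ → K, ∀ i, f i = (P i).coeff 1 := ⟨_, fun _ => rfl⟩
  obtain ⟨c, hcdef⟩ : ∃ f : ℕ → K, ∀ i, f i = (P i).coeff 0 := ⟨_, fun _ => rfl⟩
  have hbz : ∀ i, j < i → i ≤ l → b i = 0 := fun i h1 h2 => by
    rw [hbdef, hPgt i h1 h2, Polynomial.coeff_zero]
  have hcz : ∀ i, j < i → i ≤ l → c i = 0 := fun i h1 h2 => by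
    rw [hcdef, hPgt i h1 h2, Polynomial.coeff_zero]
  have hPval : ∀ i ≤ l, ∀ x : K, (P i).eval x = c i + b i * x := by
    intro i hi x
    have h2 : (P i).natDegree < 2 := lt_of_le_of_lt (hdeg i hi) one_lt_two
    rw [Polynomial.eval_eq_sum_range' h2, hbdef, hcdef]
    simp [Finset.sum_range_succ]
  have hbcj : b j ≠ 0 ∨ c j ≠ 0 := by
    by_contra h
    push_neg at h
    obtain ⟨h1, h2⟩ := h
    apply hPj
    ext k
    rw [Polynomial.coeff_zero]
    match k with
    | 0 => rw [← hcdef]; exact h2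
    | 1 => rw [← hbdef]; exact h1
    | (k + 2) =>
      apply Polynomial.coeff_eq_zero_of_natDegree_lt
      have := hdeg j hjl
      omega
  obtain ⟨s, hs⟩ : ∃ s, s = l - j := ⟨_, rfl⟩
  have hsj : s + j = l := by omega
  -- recurrence in coefficient form
  have key : ∀ n : ℕ, ∑ i ∈ range (l + 1), (c i + b i * (n : K)) * a (n + i) = 0 := by
    intro n
    rw [← hrec n]
    refine Finset.sum_congr rfl fun i hi => ?_
    rw [hPval i (by have := Finset.mem_range.mp hi; omega)]
  have keyT : ∀ n : ℕ, ∑ i ∈ range (j + 1), (c i + b i * (n : K)) * a (n + i) = 0 := by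
    intro n
    rw [← key n]
    refine Finset.sum_subset (Finset.range_subset_range.mpr (by omega)) ?_
    intro x hx hnx
    have h1 : j < x := by simp at hnx; omega
    have h2 : x ≤ l := by simp at hx; omega
    rw [hbz x h1 h2, hcz x h1 h2]
    ring
  have F1 : ∀ m : ℕ, (∑ i ∈ range (l + 1), c i * a (m + i)) +
      (m : K) * ∑ i ∈ range (l + 1), b i * a (m + i) = 0 := by
    intro m
    rw [Finset.mul_sum, ← Finset.sum_add_distrib, ← key m]
    exact Finset.sum_congr rfl fun i _ => by ring
  have F2 : ∀ M : ℕ, (c j + b j * (M : K)) * a (M + j) =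
      -∑ i ∈ range j, (c i + b i * (M : K)) * a (M + i) := by
    intro M
    have h := keyT M
    rw [Finset.sum_range_succ] at h
    linear_combination h
  have bridge : ∀ (g : ℕ → K) (n : ℕ),
      ∑ k ∈ range (l + 1), (if s ≤ k then g (k - s) else 0) * a (n + k) =
        ∑ i ∈ range (j + 1), g i * a (n + s + i) := by
    intro g n
    rw [Finset.range_eq_Ico,
      ← Finset.sum_Ico_consecutive _ (Nat.zero_le s) (by omega : s ≤ l + 1)]
    have h1 : ∑ k ∈ Finset.Ico 0 s, (if s ≤ k then g (k - s) else 0) * a (n + k) = 0 := by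
      apply Finset.sum_eq_zero
      intro k hk
      rw [Finset.mem_Ico] at hk
      rw [if_neg (by omega)]
      ring
    rw [h1, zero_add, Finset.sum_Ico_eq_sum_range]
    have h2 : l + 1 - s = j + 1 := by omega
    rw [h2]
    refine Finset.sum_congr rfl fun i _ => ?_
    rw [if_pos (Nat.le_add_right s i), Nat.add_sub_cancel_left,
      show n + (s + i) = n + s + i by omega]
  have bridgeS : ∀ n : ℕ,
      ∑ k ∈ range (l + 1), (if s ≤ k then b (k - s) else 0) * a (n + k) =
        ∑ i ∈ range (l + 1), b i * a (n + s + i) := by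
    intro n
    rw [bridge b n]
    apply Finset.sum_subset (Finset.range_subset_range.mpr (by omega))
    intro x hx hnx
    have h1 : j < x := by simp at hnx; omega
    have h2 : x ≤ l := by simp at hx; omega
    rw [hbz x h1 h2, zero_mul]
  have bridgeC : ∀ n : ℕ,
      ∑ k ∈ range (l + 1), (if s ≤ k then c (k - s) else 0) * a (n + k) =
        ∑ i ∈ range (l + 1), c i * a (n + s + i) := by
    intro n
    rw [bridge c n]
    apply Finset.sum_subset (Finset.range_subset_range.mpr (by omega))
    intro x hx hnx
    have h1 : j < x := by simp at hnx; omega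
    have h2 : x ≤ l := by simp at hx; omega
    rw [hcz x h1 h2, zero_mul]
  have evalFin : ∀ (g : ℕ → K) (n : ℕ),
      MvPolynomial.eval (fun i : Fin (l + 1) => a (n + i))
          (linP (fun k : Fin (l + 1) => g (k : ℕ))) =
        ∑ k ∈ range (l + 1), g k * a (n + k) := by
    intro g n
    rw [eval_linP]
    exact Fin.sum_univ_eq_sum_range (fun k => g k * a (n + k)) (l + 1)
  by_cases hball : ∃ i ≤ l, b i ≠ 0
  · -- Case 1: some degree-1 coefficient nonzero
    obtain ⟨i₁, hi₁l, hi₁⟩ := hball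
    have hi₁j : i₁ ≤ j := by
      by_contra h
      exact hi₁ (hbz i₁ (by omega) hi₁l)
    set sb : ℕ → K := fun k => if s ≤ k then b (k - s) else 0 with hsb
    set sc : ℕ → K := fun k => if s ≤ k then c (k - s) else 0 with hsc
    set qn : ℕ → K := fun k => (c j + b j) * sb k - b j * sc k with hqn
    set SP : MvPolynomial (Fin (l + 1)) K := linP (fun k : Fin (l + 1) => sb (k : ℕ)) with hSP
    set CP : MvPolynomial (Fin (l + 1)) K := linP (fun k : Fin (l + 1) => sc (k : ℕ)) with hCP
    refine ⟨linP (fun k : Fin (l + 1) => qn (k : ℕ)),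
      -∑ i ∈ range j, (MvPolynomial.C (c i) * SP + MvPolynomial.C (b i) * (SP - CP)) *
        MvPolynomial.X (⟨min (s + 1 + i) l, by omega⟩ : Fin (l + 1)), ?_, ?_⟩
    · by_cases hbj : b j = 0
      · have hcj : c j ≠ 0 := hbcj.resolve_left (not_not.mpr hbj)
        apply linP_ne_zero (⟨s + i₁, by omega⟩ : Fin (l + 1))
        show qn (s + i₁) ≠ 0
        rw [hqn]
        simp only [hsb, hsc, if_pos (Nat.le_add_right s i₁), Nat.add_sub_cancel_left, hbj]
        have : (c j + 0) * b i₁ - 0 * c i₁ = c j * b i₁ := by ring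
        rw [this]
        exact mul_ne_zero hcj hi₁
      · apply linP_ne_zero (⟨l, by omega⟩ : Fin (l + 1))
        show qn l ≠ 0
        rw [hqn]
        simp only [hsb, hsc, if_pos (by omega : s ≤ l), (by omega : l - s = j)]
        have : (c j + b j) * b j - b j * c j = b j * b j := by ring
        rw [this]
        exact mul_ne_zero hbj hbj
    · have hQeval : ∀ n : ℕ,
          MvPolynomial.eval (fun i : Fin (l + 1) => a (n + i))
              (linP (fun k : Fin (l + 1) => qn (k : ℕ))) =
            (c j + b j) * (∑ i ∈ range (l + 1), b i * a (n + s + i)) -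
              b j * ∑ i ∈ range (l + 1), c i * a (n + s + i) := by
        intro n
        rw [evalFin qn n]
        rw [← bridgeS n, ← bridgeC n, Finset.mul_sum, Finset.mul_sum,
          ← Finset.sum_sub_distrib]
        refine Finset.sum_congr rfl fun k _ => ?_
        rw [hqn]
        ring
      have hSPeval : ∀ n : ℕ,
          MvPolynomial.eval (fun i : Fin (l + 1) => a (n + i)) SP =
            ∑ i ∈ range (l + 1), b i * a (n + s + i) := by
        intro n
        rw [hSP, evalFin sb n, bridgeS n]
      have hCPeval : ∀ n : ℕ,
          MvPolynomial.eval (fun i : Fin (l + 1) => a (n + i)) CP =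
            ∑ i ∈ range (l + 1), c i * a (n + s + i) := by
        intro n
        rw [hCP, evalFin sc n, bridgeC n]
      have hid : ∀ n : ℕ,
          MvPolynomial.eval (fun i : Fin (l + 1) => a (n + i))
              (linP (fun k : Fin (l + 1) => qn (k : ℕ))) * a (n + l + 1) =
            MvPolynomial.eval (fun i : Fin (l + 1) => a (n + i))
              (-∑ i ∈ range j, (MvPolynomial.C (c i) * SP + MvPolynomial.C (b i) * (SP - CP)) *
                MvPolynomial.X (⟨min (s + 1 + i) l, by omega⟩ : Fin (l + 1))) := by
        intro n
        rw [hQeval n]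
        simp only [map_neg, map_sum, map_mul, map_add, map_sub, MvPolynomial.eval_C,
          MvPolynomial.eval_X]
        have hRsum : ∑ i ∈ range j,
            (c i * MvPolynomial.eval (fun i : Fin (l + 1) => a (n + i)) SP +
              b i * (MvPolynomial.eval (fun i : Fin (l + 1) => a (n + i)) SP -
                MvPolynomial.eval (fun i : Fin (l + 1) => a (n + i)) CP)) *
              a (n + ((⟨min (s + 1 + i) l, by omega⟩ : Fin (l + 1)) : ℕ)) =
            ∑ i ∈ range j,
              (c i * (∑ i ∈ range (l + 1), b i * a (n + s + i)) +
                b i * ((∑ i ∈ range (l + 1), b i * a (n + s + i)) -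
                  ∑ i ∈ range (l + 1), c i * a (n + s + i))) *
              a (n + s + 1 + i) := by
          refine Finset.sum_congr rfl fun i hi => ?_
          have hij : i < j := Finset.mem_range.mp hi
          rw [hSPeval n, hCPeval n]
          congr 1
          show a (n + min (s + 1 + i) l) = a (n + s + 1 + i)
          congr 1
          omega
        rw [hRsum]
        have h1 := F1 (n + s)
        have h2 := F2 (n + s + 1)
        have e1 : n + s + 1 + j = n + l + 1 := by omega
        rw [e1] at h2
        push_cast at h1 h2
        have hsum : ∑ i ∈ range j,
            (c i * (∑ i ∈ range (l + 1), b i * a (n + s + i)) +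
              b i * ((∑ i ∈ range (l + 1), b i * a (n + s + i)) -
                ∑ i ∈ range (l + 1), c i * a (n + s + i))) * a (n + s + 1 + i) =
            (∑ i ∈ range (l + 1), b i * a (n + s + i)) *
              ∑ i ∈ range j, (c i + b i * ((n : K) + (s : K) + 1)) * a (n + s + 1 + i) := by
          rw [Finset.mul_sum]
          refine Finset.sum_congr rfl fun i _ => ?_
          linear_combination (-(a (n + s + 1 + i) * b i)) * h1
        rw [hsum]
        linear_combination (∑ i ∈ range (l + 1), b i * a (n + s + i)) * h2 -
          (b j * a (n + l + 1)) * h1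
      intro n
      refine ⟨fun h => ?_, hid n⟩
      rw [eq_div_iff h, mul_comm]
      exact hid n
  · -- Case 2: all degree-1 coefficients vanish
    push_neg at hball
    have hcj : c j ≠ 0 := hbcj.resolve_left (not_not.mpr (hball j hjl))
    refine ⟨MvPolynomial.C (c j),
      -∑ i ∈ range j, MvPolynomial.C (c i) *
        MvPolynomial.X (⟨min (s + 1 + i) l, by omega⟩ : Fin (l + 1)), ?_, ?_⟩
    · simpa using hcj
    · have hid : ∀ n : ℕ,
          MvPolynomial.eval (fun i : Fin (l + 1) => a (n + i)) (MvPolynomial.C (c j)) *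
              a (n + l + 1) =
            MvPolynomial.eval (fun i : Fin (l + 1) => a (n + i))
              (-∑ i ∈ range j, MvPolynomial.C (c i) *
                MvPolynomial.X (⟨min (s + 1 + i) l, by omega⟩ : Fin (l + 1))) := by
        intro n
        simp only [map_neg, map_sum, map_mul, MvPolynomial.eval_C, MvPolynomial.eval_X]
        have h2 := F2 (n + s + 1)
        have e1 : n + s + 1 + j = n + l + 1 := by omega
        rw [e1, hball j hjl] at h2
        push_cast at h2
        have hsum : ∑ i ∈ range j, (c i + b i * ((n : K) + (s : K) + 1)) * a (n + s + 1 + i) =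
            ∑ i ∈ range j, c i *
              a (n + ((⟨min (s + 1 + i) l, by omega⟩ : Fin (l + 1)) : ℕ)) := by
          refine Finset.sum_congr rfl fun i hi => ?_
          have hij : i < j := Finset.mem_range.mp hi
          rw [hball i (by omega)]
          have : a (n + ((⟨min (s + 1 + i) l, by omega⟩ : Fin (l + 1)) : ℕ)) =
              a (n + s + 1 + i) := by
            show a (n + min (s + 1 + i) l) = a (n + s + 1 + i)
            congr 1
            omega
          rw [this]
          ring
        rw [hsum] at h2
        linear_combination h2
      intro n
      refine ⟨fun h => ?_, hid n⟩
      rw [eq_div_iff h, mul_comm]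
      exact hid n
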